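/- Let σ(z) = 1/(1+exp(-z)) be the logistic sigmoid. For every ξ ∈ ℝ with ξ ≠ 0 and every z ∈ ℝ, σ(z) ≥ σ(ξ) · exp((z−ξ)/2 − η(ξ)(z² − ξ²)), where η(ξ) = (1/(2ξ))(σ(ξ) − 1/2). -/

import Mathlib

noncomputable def sigmoid (z : ℝ) : ℝ := 1 / (1 + Real.exp (-z))

noncomputable def eta (ξ : ℝ) : ℝ := (1 / (2 * ξ)) * (sigmoid ξ - 1 / 2)

open Real hiding sigmoid

/-- auxiliary: derivative of tanh -/
lemma jj_hasDerivAt_tanh (x : ℝ) : HasDerivAt Real.tanh (1 / Real.cosh x ^ 2) x := by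
  have h : HasDerivAt (fun t => Real.sinh t / Real.cosh t)
      ((Real.cosh x * Real.cosh x - Real.sinh x * Real.sinh x) / Real.cosh x ^ 2) x :=
    (Real.hasDerivAt_sinh x).div (Real.hasDerivAt_cosh x) (Real.cosh_pos x).ne'
  have : (Real.cosh x * Real.cosh x - Real.sinh x * Real.sinh x) = 1 := by
    have := Real.cosh_sq_sub_sinh_sq x; nlinarith
  rw [this] at h
  refine h.congr_of_eventuallyEq ?_
  filter_upwards with t
  rw [Real.tanh_eq_sinh_div_cosh]

/-- tanh t / t is strictly antitone on positives: s * tanh t ≤ t * tanh s for 0 < s ≤ t -/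
lemma jj_tanh_ratio {s t : ℝ} (hs : 0 < s) (hst : s ≤ t) :
    s * Real.tanh t ≤ t * Real.tanh s := by
  rcases eq_or_lt_of_le hst with rfl | hlt
  · exact le_rfl
  have ht : 0 < t := hs.trans hlt
  have key : StrictAntiOn (fun u => Real.tanh u / u) (Set.Ioi (0:ℝ)) := by
    apply strictAntiOn_of_deriv_neg (convex_Ioi 0)
    · have hct : Continuous Real.tanh :=
        (by
          have : Differentiable ℝ Real.tanh := fun x => (jj_hasDerivAt_tanh x).differentiableAt
          exact this.continuous)
      exact hct.continuousOn.div continuousOn_id (fun u hu => ne_of_gt hu)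
    · intro u hu
      rw [interior_Ioi] at hu
      have hu0 : (0:ℝ) < u := hu
      have hd : HasDerivAt (fun v => Real.tanh v / v)
          (((1 / Real.cosh u ^ 2) * u - Real.tanh u * 1) / u ^ 2) u :=
        (jj_hasDerivAt_tanh u).div (hasDerivAt_id u) hu0.ne'
      rw [hd.deriv]
      apply div_neg_of_neg_of_pos _ (by positivity)
      have hsinh : 2 * u < Real.sinh (2 * u) := by
        have := Real.self_lt_sinh_iff.mpr (by linarith : (0:ℝ) < 2 * u)
        linarith
      rw [Real.sinh_two_mul] at hsinh
      have hcosh := Real.cosh_pos u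
      have : u / Real.cosh u ^ 2 < Real.sinh u / Real.cosh u := by
        rw [div_lt_div_iff₀ (by positivity) hcosh]
        nlinarith
      rw [Real.tanh_eq_sinh_div_cosh]
      calc (1 / Real.cosh u ^ 2) * u - Real.sinh u / Real.cosh u * 1
          = u / Real.cosh u ^ 2 - Real.sinh u / Real.cosh u := by ring
        _ < 0 := by linarith
  have := key (Set.mem_Ioi.mpr hs) (Set.mem_Ioi.mpr ht) hlt
  have h2 : Real.tanh t / t < Real.tanh s / s := this
  rw [div_lt_div_iff₀ ht hs] at h2
  nlinarith

noncomputable def jjH (t : ℝ) : ℝ := Real.log (Real.exp (t / 2) + Real.exp (-(t / 2)))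

lemma jjH_pos (t : ℝ) : 0 < Real.exp (t / 2) + Real.exp (-(t / 2)) := by positivity

lemma jjH_even (t : ℝ) : jjH (-t) = jjH t := by
  unfold jjH
  rw [neg_div, neg_neg, add_comm]

lemma jj_hasDerivAt_H (t : ℝ) : HasDerivAt jjH (Real.tanh (t / 2) / 2) t := by
  have h1 : HasDerivAt (fun u : ℝ => Real.exp (u / 2) + Real.exp (-(u / 2)))
      (Real.exp (t / 2) * (1/2) + Real.exp (-(t / 2)) * (-(1/2))) t := by
    have ha : HasDerivAt (fun u : ℝ => u / 2) (1/2) t := by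
      simpa using (hasDerivAt_id t).div_const 2
    have hb : HasDerivAt (fun u : ℝ => -(u / 2)) (-(1/2)) t := ha.neg
    exact ((Real.hasDerivAt_exp _).comp t ha).add ((Real.hasDerivAt_exp _).comp t hb)
  have h2 := (h1.log (jjH_pos t).ne')
  have : (Real.exp (t / 2) * (1/2) + Real.exp (-(t / 2)) * (-(1/2))) /
      (Real.exp (t / 2) + Real.exp (-(t / 2))) = Real.tanh (t / 2) / 2 := by
    rw [Real.tanh_eq_sinh_div_cosh, Real.sinh_eq, Real.cosh_eq]
    field_simp
    ring
  rw [this] at h2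
  exact h2

/-- key lemma: quadratic tangent bound for jjH -/
lemma jj_key {b : ℝ} (hb : 0 < b) {a : ℝ} (ha : 0 ≤ a) :
    jjH a ≤ jjH b + Real.tanh (b / 2) / (4 * b) * (a ^ 2 - b ^ 2) := by
  set c := Real.tanh (b / 2) / (4 * b) with hc
  set φ : ℝ → ℝ := fun u => c * u ^ 2 - jjH u with hφ
  have hderiv : ∀ u : ℝ, HasDerivAt φ (c * (2 * u) - Real.tanh (u / 2) / 2) u := by
    intro u
    exact (((hasDerivAt_pow 2 u).const_mul c).sub (jj_hasDerivAt_H u)).congr_deriv (by ring)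
  have hcont : Continuous φ := by
    have : Differentiable ℝ φ := fun u => (hderiv u).differentiableAt
    exact this.continuous
  have hmain : φ b ≤ φ a := by
    rcases le_total a b with hab | hab
    · -- antitone on [0, b]
      have hA : AntitoneOn φ (Set.Icc 0 b) := by
        apply antitoneOn_of_deriv_nonpos (convex_Icc 0 b) hcont.continuousOn
        · intro u _; exact (hderiv u).differentiableAt.differentiableWithinAt
        · intro u hu
          rw [interior_Icc] at hu
          rw [(hderiv u).deriv]
          have hu0 : 0 < u := hu.1
          have := jj_tanh_ratio (by linarith : (0:ℝ) < u / 2) (by linarith [hu.2] : u / 2 ≤ b / 2)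
          rw [hc]
          have hb4 : (0:ℝ) < 4 * b := by linarith
          rw [div_mul_eq_mul_div, sub_nonpos, div_le_div_iff₀ hb4 (by norm_num : (0:ℝ) < 2)]
          nlinarith
      exact hA (Set.mem_Icc.mpr ⟨ha, hab⟩) (Set.mem_Icc.mpr ⟨hb.le, le_refl b⟩) hab
    · -- monotone on [b, ∞)
      have hM : MonotoneOn φ (Set.Ici b) := by
        apply monotoneOn_of_deriv_nonneg (convex_Ici b) hcont.continuousOn
        · intro u _; exact (hderiv u).differentiableAt.differentiableWithinAt
        · intro u hu
          rw [interior_Ici] at hu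
          rw [(hderiv u).deriv]
          have hub : b < u := hu
          have := jj_tanh_ratio (by linarith : (0:ℝ) < b / 2) (by linarith : b / 2 ≤ u / 2)
          rw [hc]
          have hb4 : (0:ℝ) < 4 * b := by linarith
          rw [div_mul_eq_mul_div, sub_nonneg, div_le_div_iff₀ (by norm_num : (0:ℝ) < 2) hb4]
          nlinarith
      exact hM (Set.mem_Ici.mpr (le_refl b)) (Set.mem_Ici.mpr hab) hab
  have : c * b ^ 2 - jjH b ≤ c * a ^ 2 - jjH a := hmain
  linarith

lemma jj_sigmoid_eq (z : ℝ) : sigmoid z = Real.exp (z / 2 - jjH z) := by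
  unfold sigmoid jjH
  rw [Real.exp_sub, Real.exp_log (jjH_pos z)]
  rw [div_eq_div_iff (by positivity) (by positivity)]
  have hx : Real.exp (z / 2) * Real.exp (-z) = Real.exp (-(z / 2)) := by
    rw [← Real.exp_add]; congr 1; ring
  rw [one_mul, mul_add, mul_one, hx]

lemma jj_eta_eq (ξ : ℝ) (hξ : ξ ≠ 0) : eta ξ = Real.tanh (ξ / 2) / (4 * ξ) := by
  have hF2 : Real.exp (-ξ) = Real.exp (-(ξ / 2)) * Real.exp (-(ξ / 2)) := by
    rw [← Real.exp_add]; congr 1; ring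
  unfold eta sigmoid
  rw [Real.tanh_eq_sinh_div_cosh, Real.sinh_eq, Real.cosh_eq, hF2]
  have hEF : Real.exp (ξ / 2) * Real.exp (-(ξ / 2)) = 1 := by
    rw [← Real.exp_add]; simp
  set E := Real.exp (ξ / 2) with hE
  set F := Real.exp (-(ξ / 2)) with hF
  have hE0 : 0 < E := Real.exp_pos _
  have hF0 : 0 < F := Real.exp_pos _
  have h1 : 1 + F * F > 0 := by positivity
  have h2 : E + F > 0 := by positivity
  field_simp
  linear_combination (-(8 * F)) * hEF

/-- Jaakkola–Jordan quadratic lower bound on the logistic sigmoid. -/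
theorem stmt_0 (ξ : ℝ) (hξ : ξ ≠ 0) (z : ℝ) :
    sigmoid z ≥ sigmoid ξ * Real.exp ((z - ξ) / 2 - eta ξ * (z ^ 2 - ξ ^ 2)) := by
  rw [jj_sigmoid_eq z, jj_sigmoid_eq ξ, ← Real.exp_add, jj_eta_eq ξ hξ]
  apply Real.exp_le_exp.mpr
  have hb : 0 < |ξ| := abs_pos.mpr hξ
  have key := jj_key hb (abs_nonneg z)
  have hHz : jjH |z| = jjH z := by
    rcases abs_choice z with h | h
    · rw [h]
    · rw [h, jjH_even]
  have hHξ : jjH |ξ| = jjH ξ := by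
    rcases abs_choice ξ with h | h
    · rw [h]
    · rw [h, jjH_even]
  have hη : Real.tanh (|ξ| / 2) / (4 * |ξ|) = Real.tanh (ξ / 2) / (4 * ξ) := by
    rcases abs_choice ξ with h | h
    · rw [h]
    · rw [h]
      rw [neg_div, Real.tanh_neg, mul_neg, neg_div_neg_eq]
  rw [hHz, hHξ, hη, sq_abs, sq_abs] at key
  linarith
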